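/- Let G be a finite graph with a designated root vertex r, and let H be the graph with vertex set (V(G) × {0,1}) ∪ {q_0, q_1, q_2, …}, where each V(G) × {b} induces a copy of G, the vertex q_0 is adjacent to (r,0) and (r,1), and q_0, q_1, q_2, … form a one-way infinite path (the rooted product of P_3 with two copies of G and an infinite path). If G has perfect state transfer between vertices u and v at time τ, i.e., e^{−iτA(G)} e_u = γ e_v for some γ ∈ ℂ with |γ| = 1, then H has perfect state transfer between the antisymmetric dual-rail states: e^{−iτA(H)} ( (e_{(u,0)} − e_{(u,1)})/√2 ) = γ (e_{(v,0)} − e_{(v,1)})/√2. -/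

import Mathlib

noncomputable section

open Matrix

/-- Vertices of the dual-rail graph `H` (the rooted product of `P_3` with two copies of a
finite rooted graph `G` and an infinite path): `Sum.inl (w, b)` is the vertex `w` in the
copy `b ∈ {0,1}` of `G`, and `Sum.inr j` is the path vertex `q_j` (for `j ≥ 0`). -/
abbrev DualRailV (n : ℕ) := (Fin n × Bool) ⊕ ℕ

/-- Adjacency in `H`: `(w,b)(w',b)` for each edge `ww'` of `G` and each `b`;
`q_0 (r,0)` and `q_0 (r,1)`; and `q_j q_{j+1}` for `j ≥ 0`. -/
def dualRailAdj (n : ℕ) (G : SimpleGraph (Fin n)) (r : Fin n)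
    (x y : DualRailV n) : Prop :=
  (∃ (a b : Fin n) (s : Bool), G.Adj a b ∧ x = Sum.inl (a, s) ∧ y = Sum.inl (b, s)) ∨
  (∃ s : Bool, (x = Sum.inr 0 ∧ y = Sum.inl (r, s)) ∨ (y = Sum.inr 0 ∧ x = Sum.inl (r, s))) ∨
  (∃ j : ℕ, (x = Sum.inr j ∧ y = Sum.inr (j + 1)) ∨ (y = Sum.inr j ∧ x = Sum.inr (j + 1)))

/-- The Hilbert space `ℓ²(V(H))`. -/
abbrev dualRailSpace (n : ℕ) := lp (fun _ : DualRailV n => ℂ) 2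

/-- The standard orthonormal basis vector `e_w` of `ℓ²(V(H))`. -/
def stdVec {n : ℕ} (w : DualRailV n) : dualRailSpace n := lp.single 2 w 1

open scoped Classical

section DualRailAux

lemma stdVec_apply {n : ℕ} (x y : DualRailV n) :
    (stdVec y : ∀ _ : DualRailV n, ℂ) x = if x = y then 1 else 0 := by
  rcases eq_or_ne x y with rfl | h
  · simp [stdVec, lp.single_apply_self]
  · simp [stdVec, lp.single_apply_ne _ _ _ h, h]

lemma stdVec_inner {n : ℕ} (x : DualRailV n) (f : dualRailSpace n) :
    (inner ℂ (stdVec x) f : ℂ) = f x := by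
  simp [stdVec, lp.inner_single_left]

/-- The antisymmetric dual-rail difference vector `e_{(w,0)} - e_{(w,1)}`. -/
def dvec {n : ℕ} (w : Fin n) : dualRailSpace n :=
  stdVec (Sum.inl (w, false)) - stdVec (Sum.inl (w, true))

/-- The (continuous linear) dual-rail encoding map `g ↦ ∑ w, g w • (e_{(w,0)} - e_{(w,1)})`. -/
def psi (n : ℕ) : (Fin n → ℂ) →L[ℂ] dualRailSpace n :=
  ∑ w : Fin n, (ContinuousLinearMap.proj w).smulRight (dvec w)

lemma psi_apply {n : ℕ} (g : Fin n → ℂ) : psi n g = ∑ w : Fin n, g w • dvec w := by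
  simp [psi]

lemma psi_single {n : ℕ} (u : Fin n) : psi n (Pi.single u 1) = dvec u := by
  rw [psi_apply]
  simp [Pi.single_apply]

lemma dualRailAdj_inl_inl {n : ℕ} {G : SimpleGraph (Fin n)} {r : Fin n}
    (a w : Fin n) (s b : Bool) :
    dualRailAdj n G r (Sum.inl (a, s)) (Sum.inl (w, b)) ↔ G.Adj a w ∧ s = b := by
  unfold dualRailAdj
  constructor
  · rintro (⟨a', b', s', h, h1, h2⟩ | ⟨s', (⟨h1, h2⟩ | ⟨h1, h2⟩)⟩ | ⟨j, (⟨h1, h2⟩ | ⟨h1, h2⟩)⟩) <;>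
      simp_all
  · rintro ⟨h, rfl⟩
    exact Or.inl ⟨a, w, s, h, rfl, rfl⟩

lemma dualRailAdj_inr_inl {n : ℕ} {G : SimpleGraph (Fin n)} {r : Fin n}
    (j : ℕ) (w : Fin n) (b : Bool) :
    dualRailAdj n G r (Sum.inr j) (Sum.inl (w, b)) ↔ j = 0 ∧ w = r := by
  unfold dualRailAdj
  constructor
  · rintro (⟨a', b', s', h, h1, h2⟩ | ⟨s', (⟨h1, h2⟩ | ⟨h1, h2⟩)⟩ | ⟨j', (⟨h1, h2⟩ | ⟨h1, h2⟩)⟩) <;>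
      simp_all
  · rintro ⟨rfl, rfl⟩
    exact Or.inr (Or.inl ⟨b, Or.inl ⟨rfl, rfl⟩⟩)

/-- `A` intertwines the dual-rail encoding with the adjacency matrix of `G`. -/
lemma dualRail_key {n : ℕ} {G : SimpleGraph (Fin n)} [DecidableRel G.Adj] {r : Fin n}
    (A : dualRailSpace n →L[ℂ] dualRailSpace n)
    (hA : ∀ x y : DualRailV n, (inner ℂ (stdVec x) (A (stdVec y)) : ℂ)
      = if dualRailAdj n G r x y then 1 else 0) :
    ∀ g : Fin n → ℂ, A (psi n g) = psi n (G.adjMatrix ℂ *ᵥ g) := by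
  classical
  have hcoord : ∀ (x y : DualRailV n), (A (stdVec y) : ∀ _ : DualRailV n, ℂ) x
      = if dualRailAdj n G r x y then 1 else 0 := by
    intro x y; rw [← stdVec_inner]; exact hA x y
  intro g
  apply lp.ext
  funext x
  rw [psi_apply, map_sum, psi_apply]
  simp only [dvec, _root_.map_smul, map_sub, lp.coeFn_sum, Finset.sum_apply, lp.coeFn_smul,
    Pi.smul_apply, lp.coeFn_sub, Pi.sub_apply, smul_eq_mul]
  simp only [hcoord]
  rcases x with ⟨a, s⟩ | j
  · simp only [dualRailAdj_inl_inl, Sum.inl.injEq, Prod.mk.injEq]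
    cases s
    · simp [stdVec_apply, Sum.inl.injEq, Prod.mk.injEq, Matrix.mulVec, dotProduct,
        mul_ite, ite_mul, mul_comm, Finset.sum_ite_eq, Finset.sum_ite_eq', eq_comm]
    · simp [stdVec_apply, Sum.inl.injEq, Prod.mk.injEq, Matrix.mulVec, dotProduct,
        mul_ite, ite_mul, mul_comm, Finset.sum_ite_eq, Finset.sum_ite_eq', eq_comm]
  · simp [stdVec_apply, dualRailAdj_inr_inl]

/-- The exponential of `s • A` intertwines the dual-rail encoding with the matrix
exponential of `s • A(G)`. -/
lemma dualRail_exp {n : ℕ} (s : ℂ) (M : Matrix (Fin n) (Fin n) ℂ)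
    (A : dualRailSpace n →L[ℂ] dualRailSpace n)
    (key : ∀ g : Fin n → ℂ, A (psi n g) = psi n (M *ᵥ g)) :
    ∀ g : Fin n → ℂ, NormedSpace.exp (s • A) (psi n g)
      = psi n (NormedSpace.exp (s • M) *ᵥ g) := by
  intro g
  letI : SeminormedRing (Matrix (Fin n) (Fin n) ℂ) := Matrix.linftyOpSemiNormedRing
  letI : NormedRing (Matrix (Fin n) (Fin n) ℂ) := Matrix.linftyOpNormedRing
  letI : NormedAlgebra ℂ (Matrix (Fin n) (Fin n) ℂ) := Matrix.linftyOpNormedAlgebra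
  let mvlin : Matrix (Fin n) (Fin n) ℂ →ₗ[ℂ] (Fin n → ℂ) :=
    { toFun := fun X => X *ᵥ g
      map_add' := fun X Y => Matrix.add_mulVec X Y g
      map_smul' := fun c X => Matrix.smul_mulVec c X g }
  let mv : Matrix (Fin n) (Fin n) ℂ →L[ℂ] (Fin n → ℂ) :=
    LinearMap.toContinuousLinearMap mvlin
  have keypow : ∀ (k : ℕ) (h : Fin n → ℂ),
      ((s • A) ^ k) (psi n h) = psi n (((s • M) ^ k) *ᵥ h) := by
    intro k
    induction k with
    | zero => intro h; simp
    | succ k ih =>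
      intro h
      rw [pow_succ', pow_succ']
      have : ((s • A) * (s • A) ^ k) (psi n h) = (s • A) (((s • A) ^ k) (psi n h)) := rfl
      rw [this, ih h, ContinuousLinearMap.smul_apply, key,
        ← Matrix.mulVec_mulVec, Matrix.smul_mulVec, (psi n).map_smul]
  have hsumM : Summable (fun k : ℕ => ((k.factorial : ℂ)⁻¹) • (s • M) ^ k) :=
    NormedSpace.expSeries_summable' (𝕂 := ℂ) (s • M)
  have hsumA : Summable (fun k : ℕ => ((k.factorial : ℂ)⁻¹) • (s • A) ^ k) :=
    NormedSpace.expSeries_summable' (𝕂 := ℂ) (s • A)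
  have h1 : NormedSpace.exp (s • A) (psi n g)
      = ∑' k : ℕ, ((k.factorial : ℂ)⁻¹) • (((s • A) ^ k) (psi n g)) := by
    rw [NormedSpace.exp_eq_tsum (𝕂 := ℂ)]
    exact ((ContinuousLinearMap.apply ℂ (dualRailSpace n) (psi n g)).map_tsum hsumA).trans
      (by simp)
  have h2 : NormedSpace.exp (s • M) *ᵥ g
      = ∑' k : ℕ, ((k.factorial : ℂ)⁻¹) • ((s • M) ^ k *ᵥ g) := by
    rw [NormedSpace.exp_eq_tsum (𝕂 := ℂ)]
    refine (mv.map_tsum hsumM).trans ?_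
    refine tsum_congr fun k => ?_
    simp [mv, mvlin, Matrix.smul_mulVec]
  have hsum' : Summable (fun k : ℕ => ((k.factorial : ℂ)⁻¹) • ((s • M) ^ k *ᵥ g)) := by
    have := hsumM.map mv mv.continuous
    convert this using 2 with k
    simp [mv, mvlin, Matrix.smul_mulVec]
  rw [h1, h2]
  calc ∑' k : ℕ, ((k.factorial : ℂ)⁻¹) • (((s • A) ^ k) (psi n g))
      = ∑' k : ℕ, psi n (((k.factorial : ℂ)⁻¹) • ((s • M) ^ k *ᵥ g)) :=
        tsum_congr fun k => by rw [keypow k g, (psi n).map_smul]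
    _ = psi n (∑' k : ℕ, ((k.factorial : ℂ)⁻¹) • ((s • M) ^ k *ᵥ g)) :=
        ((psi n).map_tsum hsum').symm

end DualRailAux


/-- Dual-rail encoding: if `G` has perfect state transfer between `u` and `v` at time `τ`
(`e^{-iτA(G)} e_u = γ e_v`, `|γ| = 1`), then the graph `H` built from two copies of `G`
whose roots are both joined to the first vertex `q_0` of an infinite path has perfect
state transfer between the antisymmetric dual-rail states:
`e^{-iτA(H)} (e_{(u,0)} - e_{(u,1)})/√2 = γ (e_{(v,0)} - e_{(v,1)})/√2`. -/
theorem dual_rail_pst (n : ℕ) (G : SimpleGraph (Fin n)) [DecidableRel G.Adj] (r : Fin n)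
    (u v : Fin n) (τ : ℝ) (γ : ℂ) (hγ : ‖γ‖ = 1)
    (hpst : NormedSpace.exp ((-(τ : ℂ) * Complex.I) • G.adjMatrix ℂ) *ᵥ
        (Pi.single u 1 : Fin n → ℂ)
      = γ • (Pi.single v 1 : Fin n → ℂ))
    (A : dualRailSpace n →L[ℂ] dualRailSpace n) (hsa : IsSelfAdjoint A)
    (hA : ∀ x y : DualRailV n, (inner ℂ (stdVec x) (A (stdVec y)) : ℂ)
      = if dualRailAdj n G r x y then 1 else 0) :
    NormedSpace.exp ((-(τ : ℂ) * Complex.I) • A)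
        (((Real.sqrt 2 : ℂ))⁻¹ •
          (stdVec (Sum.inl (u, false) : DualRailV n)
            - stdVec (Sum.inl (u, true) : DualRailV n)))
      = γ • (((Real.sqrt 2 : ℂ))⁻¹ •
          (stdVec (Sum.inl (v, false) : DualRailV n)
            - stdVec (Sum.inl (v, true) : DualRailV n))) := by
  have key := dualRail_key A hA
  have hexp := dualRail_exp (-(τ : ℂ) * Complex.I) (G.adjMatrix ℂ) A key
  have hdu : stdVec (Sum.inl (u, false) : DualRailV n)
      - stdVec (Sum.inl (u, true) : DualRailV n) = psi n (Pi.single u 1) :=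
    (psi_single u).symm
  have hdv : stdVec (Sum.inl (v, false) : DualRailV n)
      - stdVec (Sum.inl (v, true) : DualRailV n) = psi n (Pi.single v 1) :=
    (psi_single v).symm
  rw [hdu, hdv, _root_.map_smul, hexp (Pi.single u 1), hpst, (psi n).map_smul,
    smul_comm ((Real.sqrt 2 : ℂ))⁻¹ γ]
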